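/- Let (X,d,μ) be a metric measure space, u ∈ L¹_loc(X,μ), and x a Lebesgue point of u. Define ε_x(r) := sup_{y ∈ B_r(x)} |δ_r(x,y)|, where δ_r(x,y) := 1 − μ(B_r(x))/μ(B_r(y)). If ε_x(r) = O(r²) as r ↓ 0, then |Δ_{μ,r}u(x) − Δ̃_{μ,r}u(x)| → 0 as r ↓ 0. In particular, Δ_{μ,r}u(x) converges as r ↓ 0 if and only if Δ̃_{μ,r}u(x) does, and in that case the two limits coincide. -/

import Mathlib

open MeasureTheory Filter Metric Set
open scoped ENNReal Topology

/-- The AMV `r`-operator at a Lebesgue point `x` with Lebesgue value `c`. -/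
noncomputable def amvOp {X : Type*} [MetricSpace X] [MeasurableSpace X]
    (μ : Measure X) (u : X → ℝ) (c : ℝ) (x : X) (r : ℝ) : ℝ :=
  (1 / r ^ 2) * ⨍ y in ball x r, (u y - c) ∂μ

/-- The SAMV `r`-operator at a Lebesgue point `x` with Lebesgue value `c`. -/
noncomputable def samvOp {X : Type*} [MetricSpace X] [MeasurableSpace X]
    (μ : Measure X) (u : X → ℝ) (c : ℝ) (x : X) (r : ℝ) : ℝ :=
  (1 / (2 * r ^ 2)) *
    ⨍ y in ball x r, (u y - c) * (1 + (μ (ball x r)).toReal / (μ (ball y r)).toReal) ∂μ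


lemma lsc_measure_ball' {X : Type*} [MetricSpace X] [MeasurableSpace X]
    (μ : Measure X) (r : ℝ) : LowerSemicontinuous fun y => μ (ball y r) := by
  intro y₀ c hc
  simp only [] at hc ⊢
  rcases le_or_gt r 0 with hr | hr
  · rw [ball_eq_empty.2 hr, measure_empty] at hc
    exact absurd hc (by simp)
  · have hmono : Monotone fun n : ℕ => ball y₀ (r - r / (n + 1)) := by
      intro n m hnm
      apply ball_subset_ball
      have h1 : r / (m + 1 : ℝ) ≤ r / (n + 1 : ℝ) := by
        apply div_le_div_of_nonneg_left hr.le (by positivity)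
        exact_mod_cast by omega
      linarith
    have hU : (⋃ n : ℕ, ball y₀ (r - r / (n + 1))) = ball y₀ r := by
      apply Subset.antisymm
      · refine iUnion_subset fun n => ball_subset_ball ?_
        have : 0 ≤ r / (n + 1 : ℝ) := by positivity
        linarith
      · intro z hz
        rw [mem_ball] at hz
        have hd : 0 < r - dist z y₀ := by linarith
        obtain ⟨n, hn⟩ := exists_nat_gt (r / (r - dist z y₀))
        refine mem_iUnion.2 ⟨n, mem_ball.2 ?_⟩
        have h1 : r / (n + 1 : ℝ) < r - dist z y₀ := by
          rw [div_lt_iff₀ (by positivity)]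
          have h2 : r / (r - dist z y₀) < (n : ℝ) + 1 := hn.trans (lt_add_one _)
          calc r = r / (r - dist z y₀) * (r - dist z y₀) := by field_simp
            _ < ((n : ℝ) + 1) * (r - dist z y₀) := mul_lt_mul_of_pos_right h2 hd
            _ = (r - dist z y₀) * ((n : ℝ) + 1) := mul_comm _ _
        linarith
    have htend := tendsto_measure_iUnion_atTop (μ := μ) hmono
    rw [hU] at htend
    have hev : ∀ᶠ n : ℕ in atTop, c < μ (ball y₀ (r - r / (n + 1 : ℝ))) :=
      htend (Ioi_mem_nhds hc)
    obtain ⟨n, hn⟩ := hev.exists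
    have hε : 0 < r / (n + 1 : ℝ) := by positivity
    filter_upwards [ball_mem_nhds y₀ hε] with y hy
    refine hn.trans_le (measure_mono fun z hz => ?_)
    rw [mem_ball] at hz hy ⊢
    calc dist z y ≤ dist z y₀ + dist y₀ y := dist_triangle _ _ _
      _ < (r - r / (n + 1)) + r / (n + 1) := by
          rw [dist_comm y₀ y]; exact add_lt_add hz hy
      _ = r := by ring

lemma measurable_measure_ball' {X : Type*} [MetricSpace X] [MeasurableSpace X] [BorelSpace X]
    (μ : Measure X) (r : ℝ) : Measurable fun y => μ (ball y r) :=
  (lsc_measure_ball' μ r).measurable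

/-- Let `(X,d,μ)` be a metric measure space, `u ∈ L¹_loc` and `x` a Lebesgue
point of `u`.  If `ε_x(r) := sup_{y ∈ B_r(x)} |1 − μ(B_r(x))/μ(B_r(y))| = O(r²)` as `r ↓ 0`,
then `|Δ_{μ,r}u(x) − Δ̃_{μ,r}u(x)| → 0` as `r ↓ 0`; in particular `Δ_{μ,r}u(x)` converges iff
`Δ̃_{μ,r}u(x)` does, and the limits coincide. -/
theorem stmt_6 {X : Type*} [MetricSpace X] [MeasurableSpace X] [BorelSpace X]
    (μ : Measure X)
    (hμ : ∀ (x : X) (r : ℝ), 0 < r → 0 < μ (ball x r) ∧ μ (ball x r) < ∞)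
    (u : X → ℝ) (hu : LocallyIntegrable u μ) (x : X) (c : ℝ)
    (hleb : Tendsto (fun r => ⨍ y in ball x r, |u y - c| ∂μ) (𝓝[>] (0 : ℝ)) (𝓝 0))
    (hO : ∃ K r₁ : ℝ, 0 < K ∧ 0 < r₁ ∧ ∀ r : ℝ, 0 < r → r < r₁ → ∀ y ∈ ball x r,
      |1 - (μ (ball x r)).toReal / (μ (ball y r)).toReal| ≤ K * r ^ 2) :
    Tendsto (fun r => |amvOp μ u c x r - samvOp μ u c x r|) (𝓝[>] (0 : ℝ)) (𝓝 0) ∧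
    ∀ L : ℝ,
      Tendsto (fun r => amvOp μ u c x r) (𝓝[>] (0 : ℝ)) (𝓝 L) ↔
      Tendsto (fun r => samvOp μ u c x r) (𝓝[>] (0 : ℝ)) (𝓝 L) := by
  
  obtain ⟨K, r₁, hK, hr₁, hbound⟩ := hO
  have havg : ∀ r : ℝ, 0 ≤ ⨍ y in ball x r, |u y - c| ∂μ := by
    intro r
    rw [setAverage_eq, smul_eq_mul]
    have h1 : 0 ≤ ∫ y in ball x r, |u y - c| ∂μ :=
      integral_nonneg fun y => abs_nonneg _
    positivity
  obtain ⟨s, hs, hsi⟩ := hu x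
  obtain ⟨ε, hε, hball⟩ := Metric.mem_nhds_iff.1 hs
  have key : ∀ r : ℝ, 0 < r → r < min r₁ ε →
      |amvOp μ u c x r - samvOp μ u c x r| ≤ K / 2 * ⨍ y in ball x r, |u y - c| ∂μ := by
    intro r hr hrm
    have hrr₁ : r < r₁ := hrm.trans_le (min_le_left _ _)
    have hrε : r < ε := hrm.trans_le (min_le_right _ _)
    have hbx := hμ x r hr
    have hm0 : (μ (ball x r)).toReal ≠ 0 := (ENNReal.toReal_pos hbx.1.ne' hbx.2.ne).ne'
    have hae : ∀ᵐ y ∂μ.restrict (ball x r), y ∈ ball x r := ae_restrict_mem measurableSet_ball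
    have hq0 : ∀ y : X, (0:ℝ) ≤ (μ (ball x r)).toReal / (μ (ball y r)).toReal :=
      fun y => div_nonneg ENNReal.toReal_nonneg ENNReal.toReal_nonneg
    have hint : IntegrableOn (fun y => u y - c) (ball x r) μ := by
      have h1 : IntegrableOn u (ball x r) μ :=
        hsi.mono_set ((ball_subset_ball hrε.le).trans hball)
      exact h1.sub (integrableOn_const hbx.2.ne)
    have hfm : AEStronglyMeasurable (fun y => u y - c) (μ.restrict (ball x r)) :=
      hint.aestronglyMeasurable
    -- main computation
    have hqm : Measurable fun y =>
          (1:ℝ) + (μ (ball x r)).toReal / (μ (ball y r)).toReal :=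
        measurable_const.add
          (measurable_const.div ((measurable_measure_ball' μ r).ennreal_toReal))
    have hg : IntegrableOn
        (fun y => (u y - c) * (1 + (μ (ball x r)).toReal / (μ (ball y r)).toReal))
        (ball x r) μ := by
      refine Integrable.mono (hint.norm.const_mul (2 + K * r ^ 2))
        (hfm.mul hqm.aestronglyMeasurable.restrict) ?_
      filter_upwards [hae] with y hy
      have hb := hbound r hr hrr₁ y hy
      have hb1 := (abs_le.1 hb).1
      simp only [Real.norm_eq_abs, abs_mul, abs_abs]
      rw [abs_of_nonneg (show (0:ℝ) ≤ 2 + K * r ^ 2 by positivity)]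
      have h2 : |1 + (μ (ball x r)).toReal / (μ (ball y r)).toReal| ≤ 2 + K * r ^ 2 := by
        rw [abs_of_nonneg (by linarith [hq0 y])]
        linarith [hq0 y]
      calc |u y - c| * |1 + (μ (ball x r)).toReal / (μ (ball y r)).toReal|
          ≤ |u y - c| * (2 + K * r ^ 2) := by
            exact mul_le_mul_of_nonneg_left h2 (abs_nonneg _)
        _ = (2 + K * r ^ 2) * |u y - c| := mul_comm _ _
    have hI : (∫ y in ball x r,
          (u y - c) * (1 - (μ (ball x r)).toReal / (μ (ball y r)).toReal) ∂μ)
        = 2 * (∫ y in ball x r, (u y - c) ∂μ)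
          - ∫ y in ball x r,
              (u y - c) * (1 + (μ (ball x r)).toReal / (μ (ball y r)).toReal) ∂μ := by
      rw [← integral_const_mul, ← integral_sub (hint.const_mul 2) hg]
      congr 1
      funext y
      ring
    have hIb : |∫ y in ball x r,
          (u y - c) * (1 - (μ (ball x r)).toReal / (μ (ball y r)).toReal) ∂μ|
        ≤ K * r ^ 2 * ∫ y in ball x r, |u y - c| ∂μ := by
      have hib : Integrable (fun y => K * r ^ 2 * |u y - c|) (μ.restrict (ball x r)) := by
        simpa [Real.norm_eq_abs] using hint.norm.const_mul (K * r ^ 2)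
      have := norm_integral_le_of_norm_le hib (f := fun y =>
          (u y - c) * (1 - (μ (ball x r)).toReal / (μ (ball y r)).toReal)) ?_
      · rw [Real.norm_eq_abs] at this
        rw [integral_const_mul] at this
        exact this
      · filter_upwards [hae] with y hy
        have hb := hbound r hr hrr₁ y hy
        rw [Real.norm_eq_abs, abs_mul]
        have := abs_nonneg (u y - c)
        nlinarith [abs_nonneg (1 - (μ (ball x r)).toReal / (μ (ball y r)).toReal)]
    have hEq : amvOp μ u c x r - samvOp μ u c x r
        = 1 / (2 * r ^ 2) * ((μ (ball x r)).toReal⁻¹ *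
            ∫ y in ball x r,
              (u y - c) * (1 - (μ (ball x r)).toReal / (μ (ball y r)).toReal) ∂μ) := by
      simp only [amvOp, samvOp, setAverage_eq, smul_eq_mul, measureReal_def, hI]
      ring
    calc |amvOp μ u c x r - samvOp μ u c x r|
        = 1 / (2 * r ^ 2) * ((μ (ball x r)).toReal⁻¹ *
            |∫ y in ball x r,
              (u y - c) * (1 - (μ (ball x r)).toReal / (μ (ball y r)).toReal) ∂μ|) := by
          rw [hEq, abs_mul, abs_mul, abs_of_nonneg (show (0:ℝ) ≤ 1 / (2 * r ^ 2) by positivity),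
            abs_of_nonneg (inv_nonneg.2 ENNReal.toReal_nonneg)]
      _ ≤ 1 / (2 * r ^ 2) * ((μ (ball x r)).toReal⁻¹ *
            (K * r ^ 2 * ∫ y in ball x r, |u y - c| ∂μ)) := by
          gcongr
      _ = K / 2 * ((μ (ball x r)).toReal⁻¹ * ∫ y in ball x r, |u y - c| ∂μ) := by
          field_simp
      _ = K / 2 * ⨍ y in ball x r, |u y - c| ∂μ := by
          rw [setAverage_eq, smul_eq_mul, measureReal_def]
  have h1 : Tendsto (fun r => |amvOp μ u c x r - samvOp μ u c x r|) (𝓝[>] (0:ℝ)) (𝓝 0) := by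
    have hb : Tendsto (fun r => K / 2 * ⨍ y in ball x r, |u y - c| ∂μ) (𝓝[>] (0:ℝ)) (𝓝 0) := by
      simpa using hleb.const_mul (K / 2)
    refine squeeze_zero' (Eventually.of_forall fun r => abs_nonneg _) ?_ hb
    filter_upwards [Ioo_mem_nhdsGT_of_mem ⟨le_refl (0:ℝ), lt_min hr₁ hε⟩] with r hrm
    exact key r hrm.1 hrm.2
  have h2 : Tendsto (fun r => amvOp μ u c x r - samvOp μ u c x r) (𝓝[>] (0:ℝ)) (𝓝 0) := by
    rw [tendsto_zero_iff_abs_tendsto_zero]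
    exact h1
  refine ⟨h1, fun L => ?_⟩
  constructor
  · intro h
    simpa only [sub_sub_cancel, sub_zero] using h.sub h2
  · intro h
    simpa only [sub_add_cancel, zero_add] using h2.add h
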